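/- Let P, Q be probability distributions on ℝ with everywhere positive continuous densities f_X, f_Y and CDFs F_X, F_Y, and let X ∼ P. Let Q_P^{QT} denote the law of F_Y(X), and let U denote the uniform distribution on [0, 1]. Then TVD(Q_P^{QT}, U) = TVD(P, Q); by symmetry also TVD(P_Q^{QT}, U) = TVD(P, Q), where P_Q^{QT} is the law of F_X(Y) for Y ∼ Q. -/

import Mathlib

open MeasureTheory Set

/-- The total variation distance between two measures on `ℝ`, computed via their
densities (Radon–Nikodym derivatives) with respect to Lebesgue measure:
`TVD(P,Q) = (1/2) ∫ |p(x) - q(x)| dx`. -/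
noncomputable def TVD (μ ν : Measure ℝ) : ℝ :=
  (1 / 2) * ∫ x, |(μ.rnDeriv volume x).toReal - (ν.rnDeriv volume x).toReal|

open Filter Topology

lemma TVD_comm (μ ν : Measure ℝ) : TVD μ ν = TVD ν μ := by
  unfold TVD; simp_rw [abs_sub_comm]

lemma tvd_eq_set (μ ν : Measure ℝ) [IsProbabilityMeasure μ] [IsProbabilityMeasure ν]
    (hμ : μ ≪ (volume : Measure ℝ)) (hν : ν ≪ (volume : Measure ℝ)) :
    TVD μ ν = (μ {x | ν.rnDeriv volume x < μ.rnDeriv volume x}).toReal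
      - (ν {x | ν.rnDeriv volume x < μ.rnDeriv volume x}).toReal := by
  set f : ℝ → ℝ := fun x => (μ.rnDeriv volume x).toReal with hfdef
  set g : ℝ → ℝ := fun x => (ν.rnDeriv volume x).toReal with hgdef
  set S : Set ℝ := {x | ν.rnDeriv volume x < μ.rnDeriv volume x} with hSdef
  have hS : MeasurableSet S := measurableSet_lt (Measure.measurable_rnDeriv _ _)
    (Measure.measurable_rnDeriv _ _)
  have hf : Integrable f volume := Measure.integrable_toReal_rnDeriv
  have hg : Integrable g volume := Measure.integrable_toReal_rnDeriv
  have hμtop := Measure.rnDeriv_lt_top μ (volume : Measure ℝ)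
  have hνtop := Measure.rnDeriv_lt_top ν (volume : Measure ℝ)
  -- a.e. facts
  have hae1 : ∀ᵐ x ∂(volume.restrict S), |f x - g x| = f x - g x := by
    have : ∀ᵐ x ∂(volume : Measure ℝ), x ∈ S → |f x - g x| = f x - g x := by
      filter_upwards [hμtop, hνtop] with x hx1 hx2 hxS
      have : g x ≤ f x := ENNReal.toReal_le_toReal hx2.ne hx1.ne |>.mpr (le_of_lt hxS)
      rw [abs_of_nonneg (by linarith)]
    exact (ae_restrict_iff' hS).mpr this
  have hae2 : ∀ᵐ x ∂(volume.restrict Sᶜ), |f x - g x| = g x - f x := by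
    have : ∀ᵐ x ∂(volume : Measure ℝ), x ∈ Sᶜ → |f x - g x| = g x - f x := by
      filter_upwards [hμtop, hνtop] with x hx1 hx2 hxS
      have hle : μ.rnDeriv volume x ≤ ν.rnDeriv volume x := not_lt.mp hxS
      have : f x ≤ g x := ENNReal.toReal_le_toReal hx1.ne hx2.ne |>.mpr hle
      rw [abs_of_nonpos (by linarith), neg_sub]
    exact (ae_restrict_iff' hS.compl).mpr this
  have hsub : Integrable (fun x => |f x - g x|) volume := (hf.sub hg).abs
  have hsplit : ∫ x, |f x - g x| = (∫ x in S, |f x - g x|) + ∫ x in Sᶜ, |f x - g x| :=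
    (integral_add_compl hS hsub).symm
  have hfS : ∫ x in S, f x = (μ S).toReal := Measure.setIntegral_toReal_rnDeriv hμ S
  have hgS : ∫ x in S, g x = (ν S).toReal := Measure.setIntegral_toReal_rnDeriv hν S
  have hfSc : ∫ x in Sᶜ, f x = (μ Sᶜ).toReal := Measure.setIntegral_toReal_rnDeriv hμ Sᶜ
  have hgSc : ∫ x in Sᶜ, g x = (ν Sᶜ).toReal := Measure.setIntegral_toReal_rnDeriv hν Sᶜ
  have hμc : (μ Sᶜ).toReal = 1 - (μ S).toReal := by
    have := measure_compl hS (measure_ne_top μ S)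
    rw [this, measure_univ, ENNReal.toReal_sub_of_le prob_le_one ENNReal.one_ne_top,
      ENNReal.toReal_one]
  have hνc : (ν Sᶜ).toReal = 1 - (ν S).toReal := by
    have := measure_compl hS (measure_ne_top ν S)
    rw [this, measure_univ, ENNReal.toReal_sub_of_le prob_le_one ENNReal.one_ne_top,
      ENNReal.toReal_one]
  have h1 : ∫ x in S, |f x - g x| = (μ S).toReal - (ν S).toReal := by
    rw [integral_congr_ae hae1, integral_sub (hf.restrict) (hg.restrict), hfS, hgS]
  have h2 : ∫ x in Sᶜ, |f x - g x| = (μ S).toReal - (ν S).toReal := by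
    rw [integral_congr_ae hae2, integral_sub (hg.restrict) (hf.restrict), hfSc, hgSc,
      hμc, hνc]
    ring
  unfold TVD
  rw [hsplit, h1, h2]; ring

lemma tvd_ge (μ ν : Measure ℝ) [IsProbabilityMeasure μ] [IsProbabilityMeasure ν]
    (hμ : μ ≪ (volume : Measure ℝ)) (hν : ν ≪ (volume : Measure ℝ))
    (A : Set ℝ) (hA : MeasurableSet A) :
    (μ A).toReal - (ν A).toReal ≤ TVD μ ν := by
  set f : ℝ → ℝ := fun x => (μ.rnDeriv volume x).toReal with hfdef
  set g : ℝ → ℝ := fun x => (ν.rnDeriv volume x).toReal with hgdef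
  set S : Set ℝ := {x | ν.rnDeriv volume x < μ.rnDeriv volume x} with hSdef
  have hS : MeasurableSet S := measurableSet_lt (Measure.measurable_rnDeriv _ _)
    (Measure.measurable_rnDeriv _ _)
  have hf : Integrable f volume := Measure.integrable_toReal_rnDeriv
  have hg : Integrable g volume := Measure.integrable_toReal_rnDeriv
  have hμtop := Measure.rnDeriv_lt_top μ (volume : Measure ℝ)
  have hνtop := Measure.rnDeriv_lt_top ν (volume : Measure ℝ)
  have hApos : (μ A).toReal - (ν A).toReal = ∫ x in A, (f x - g x) := by
    rw [integral_sub (hf.restrict) (hg.restrict),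
      Measure.setIntegral_toReal_rnDeriv hμ A, Measure.setIntegral_toReal_rnDeriv hν A]
    rfl
  have hnonnegS : 0 ≤ᵐ[volume.restrict S] fun x => f x - g x := by
    refine (ae_restrict_iff' hS).mpr ?_
    filter_upwards [hμtop, hνtop] with x hx1 hx2 hxS
    have : g x ≤ f x := ENNReal.toReal_le_toReal hx2.ne hx1.ne |>.mpr (le_of_lt hxS)
    exact sub_nonneg.mpr this
  have hnonposSc : ∀ᵐ x ∂(volume.restrict (A \ S)), f x - g x ≤ 0 := by
    refine ae_restrict_of_ae_restrict_of_subset (fun x hx => hx.2 : A \ S ⊆ Sᶜ) ?_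
    refine (ae_restrict_iff' hS.compl).mpr ?_
    filter_upwards [hμtop, hνtop] with x hx1 hx2 hxS
    have hle : μ.rnDeriv volume x ≤ ν.rnDeriv volume x := not_lt.mp hxS
    have : f x ≤ g x := ENNReal.toReal_le_toReal hx1.ne hx2.ne |>.mpr hle
    exact sub_nonpos.mpr this
  have hintAB : IntegrableOn (fun x => f x - g x) A volume := (hf.sub hg).integrableOn
  have hsplitA : ∫ x in A, (f x - g x) =
      (∫ x in A ∩ S, (f x - g x)) + ∫ x in A \ S, (f x - g x) :=
    (integral_inter_add_diff hS hintAB).symm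
  have h1 : ∫ x in A ∩ S, (f x - g x) ≤ ∫ x in S, (f x - g x) :=
    setIntegral_mono_set (hf.sub hg).integrableOn hnonnegS
      (HasSubset.Subset.eventuallyLE inter_subset_right)
  have h2 : ∫ x in A \ S, (f x - g x) ≤ 0 := setIntegral_nonpos_of_ae_restrict hnonposSc
  have hSeq : ∫ x in S, (f x - g x) = TVD μ ν := by
    rw [integral_sub (hf.restrict) (hg.restrict),
      Measure.setIntegral_toReal_rnDeriv hμ S, Measure.setIntegral_toReal_rnDeriv hν S,
      tvd_eq_set μ ν hμ hν]
    rfl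
  linarith [hApos, hsplitA, h1, h2, hSeq]

section CDF
variable {Q : Measure ℝ} [IsProbabilityMeasure Q] {fY : ℝ → ℝ} {FY : ℝ → ℝ}

lemma vol_ac (hfYpos : ∀ x, 0 < fY x) (hfYc : Continuous fY)
    (hQ : Q = volume.withDensity (fun x => ENNReal.ofReal (fY x))) :
    (volume : Measure ℝ) ≪ Q := by
  rw [hQ]
  exact withDensity_absolutelyContinuous'
    (ENNReal.measurable_ofReal.comp hfYc.measurable).aemeasurable
    (Filter.Eventually.of_forall fun x => (ENNReal.ofReal_pos.mpr (hfYpos x)).ne')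

lemma FY_strictMono (hfYpos : ∀ x, 0 < fY x) (hfYc : Continuous fY)
    (hQ : Q = volume.withDensity (fun x => ENNReal.ofReal (fY x)))
    (hFY : ∀ x, FY x = (Q (Iic x)).toReal) : StrictMono FY := by
  intro x y hxy
  have hvQ := vol_ac hfYpos hfYc hQ
  have hne : Q (Ioc x y) ≠ 0 := by
    intro h
    have : volume (Ioc x y) = 0 := hvQ h
    rw [Real.volume_Ioc] at this
    simp only [ENNReal.ofReal_eq_zero, sub_nonpos] at this
    exact absurd this (not_le.mpr hxy)
  have hlt : Q (Iic x) < Q (Iic y) := by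
    calc Q (Iic x) < Q (Iic x) + Q (Ioc x y) :=
          ENNReal.lt_add_right (measure_ne_top _ _) hne
    _ = Q (Iic y) := by
          rw [← measure_union (Iic_disjoint_Ioc le_rfl) measurableSet_Ioc,
            Iic_union_Ioc_eq_Iic hxy.le]
  rw [hFY x, hFY y]
  exact (ENNReal.toReal_lt_toReal (measure_ne_top _ _) (measure_ne_top _ _)).mpr hlt

lemma fY_integrable (hfYpos : ∀ x, 0 < fY x) (hfYc : Continuous fY)
    (hQ : Q = volume.withDensity (fun x => ENNReal.ofReal (fY x))) :
    Integrable fY (volume : Measure ℝ) := by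
  have h1 : ∫⁻ x, ENNReal.ofReal (fY x) = 1 := by
    have h := measure_univ (μ := Q)
    rw [hQ, withDensity_apply _ MeasurableSet.univ] at h
    simpa using h
  refine ⟨hfYc.aestronglyMeasurable, ?_⟩
  rw [hasFiniteIntegral_iff_norm]
  have : ∀ x, ENNReal.ofReal ‖fY x‖ = ENNReal.ofReal (fY x) := fun x => by
    rw [Real.norm_eq_abs, abs_of_pos (hfYpos x)]
  simp_rw [this, h1]
  exact ENNReal.one_lt_top

lemma FY_eq_integral (hfYpos : ∀ x, 0 < fY x) (hfYc : Continuous fY)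
    (hQ : Q = volume.withDensity (fun x => ENNReal.ofReal (fY x)))
    (hFY : ∀ x, FY x = (Q (Iic x)).toReal) (t : ℝ) :
    FY t = ∫ x in Iic t, fY x := by
  have hin := fY_integrable hfYpos hfYc hQ
  rw [hFY, hQ, withDensity_apply _ measurableSet_Iic,
    ← ofReal_integral_eq_lintegral_ofReal hin.integrableOn
      (Filter.Eventually.of_forall fun x => (hfYpos x).le),
    ENNReal.toReal_ofReal]
  exact integral_nonneg fun x => (hfYpos x).le

lemma FY_continuous (hfYpos : ∀ x, 0 < fY x) (hfYc : Continuous fY)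
    (hQ : Q = volume.withDensity (fun x => ENNReal.ofReal (fY x)))
    (hFY : ∀ x, FY x = (Q (Iic x)).toReal) : Continuous FY := by
  have hin := fY_integrable hfYpos hfYc hQ
  have heq : FY = fun t => (∫ x in Iic (0:ℝ), fY x) + ∫ x in (0:ℝ)..t, fY x := by
    funext t
    rw [FY_eq_integral hfYpos hfYc hQ hFY t,
      ← intervalIntegral.integral_Iic_sub_Iic hin.integrableOn hin.integrableOn]
    ring
  rw [heq]
  exact continuous_const.add
    (intervalIntegral.continuous_primitive (fun a b => hin.intervalIntegrable) 0)

lemma FY_tendsto_atBot (hFY : ∀ x, FY x = (Q (Iic x)).toReal) :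
    Tendsto FY atBot (𝓝 0) := by
  have : FY = ProbabilityTheory.cdf Q := by
    funext x; rw [hFY, ProbabilityTheory.cdf_eq_real]; rfl
  rw [this]; exact ProbabilityTheory.tendsto_cdf_atBot Q

lemma FY_tendsto_atTop (hFY : ∀ x, FY x = (Q (Iic x)).toReal) :
    Tendsto FY atTop (𝓝 1) := by
  have : FY = ProbabilityTheory.cdf Q := by
    funext x; rw [hFY, ProbabilityTheory.cdf_eq_real]; rfl
  rw [this]; exact ProbabilityTheory.tendsto_cdf_atTop Q

lemma FY_pos (hfYpos : ∀ x, 0 < fY x) (hfYc : Continuous fY)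
    (hQ : Q = volume.withDensity (fun x => ENNReal.ofReal (fY x)))
    (hFY : ∀ x, FY x = (Q (Iic x)).toReal) (x : ℝ) : 0 < FY x := by
  rw [hFY]
  refine ENNReal.toReal_pos ?_ (measure_ne_top _ _)
  intro h
  have : volume (Iic x) = 0 := vol_ac hfYpos hfYc hQ h
  simp [Real.volume_Iic] at this

lemma FY_lt_one (hfYpos : ∀ x, 0 < fY x) (hfYc : Continuous fY)
    (hQ : Q = volume.withDensity (fun x => ENNReal.ofReal (fY x)))
    (hFY : ∀ x, FY x = (Q (Iic x)).toReal) (x : ℝ) : FY x < 1 := by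
  have hne : Q (Ioi x) ≠ 0 := by
    intro h
    have : volume (Ioi x) = 0 := vol_ac hfYpos hfYc hQ h
    simp [Real.volume_Ioi] at this
  have hlt : Q (Iic x) < 1 := by
    have : Q (Iic x) + Q (Ioi x) = 1 := by
      rw [← measure_union (Iic_disjoint_Ioi le_rfl) measurableSet_Ioi, Iic_union_Ioi,
        measure_univ]
    calc Q (Iic x) < Q (Iic x) + Q (Ioi x) :=
          ENNReal.lt_add_right (measure_ne_top _ _) hne
    _ = 1 := this
  rw [hFY]
  have := (ENNReal.toReal_lt_toReal (measure_ne_top _ _) ENNReal.one_ne_top).mpr hlt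
  simpa using this

lemma map_FY_eq (hfYpos : ∀ x, 0 < fY x) (hfYc : Continuous fY)
    (hQ : Q = volume.withDensity (fun x => ENNReal.ofReal (fY x)))
    (hFY : ∀ x, FY x = (Q (Iic x)).toReal) :
    Measure.map FY Q = volume.restrict (Icc (0:ℝ) 1) := by
  have hmono := FY_strictMono hfYpos hfYc hQ hFY
  have hcont := FY_continuous hfYpos hfYc hQ hFY
  have hmeas : Measurable FY := hmono.monotone.measurable
  have : IsProbabilityMeasure (Measure.map FY Q) :=
    Measure.isProbabilityMeasure_map hmeas.aemeasurable
  refine Measure.ext_of_Iic _ _ fun t => ?_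
  rw [Measure.map_apply hmeas measurableSet_Iic, Measure.restrict_apply measurableSet_Iic]
  rcases le_or_gt t 0 with ht0 | ht0
  · have h1 : FY ⁻¹' Iic t = ∅ := by
      rw [eq_empty_iff_forall_notMem]
      intro x hx
      exact absurd (le_trans (hx : FY x ≤ t) ht0) (not_le.mpr (FY_pos hfYpos hfYc hQ hFY x))
    have h2 : volume (Iic t ∩ Icc 0 1) = 0 := by
      refine measure_mono_null (fun x hx => ?_ : Iic t ∩ Icc 0 1 ⊆ Icc 0 t) ?_
      · exact ⟨hx.2.1, hx.1⟩
      · rw [Real.volume_Icc]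
        simp [ht0]
    rw [h1, h2, measure_empty]
  rcases le_or_gt 1 t with ht1 | ht1
  · have h1 : FY ⁻¹' Iic t = univ := by
      rw [eq_univ_iff_forall]
      exact fun x => le_trans (FY_lt_one hfYpos hfYc hQ hFY x).le ht1
    have h2 : Iic t ∩ Icc (0:ℝ) 1 = Icc 0 1 :=
      inter_eq_self_of_subset_right fun x hx => le_trans hx.2 ht1
    rw [h1, h2, measure_univ, Real.volume_Icc]
    norm_num
  · -- 0 < t < 1
    obtain ⟨a, ha⟩ := ((FY_tendsto_atBot (Q := Q) hFY).eventually_lt_const ht0).exists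
    obtain ⟨b, hb⟩ := ((FY_tendsto_atTop (Q := Q) hFY).eventually_const_lt ht1).exists
    have hab : a ≤ b := (hmono.lt_iff_lt.mp (ha.trans hb)).le
    obtain ⟨x₀, _, hx₀⟩ := intermediate_value_Icc hab hcont.continuousOn ⟨ha.le, hb.le⟩
    have h1 : FY ⁻¹' Iic t = Iic x₀ := by
      ext x
      simp only [mem_preimage, mem_Iic]
      constructor
      · intro h
        by_contra hc
        exact absurd (hx₀ ▸ hmono (not_le.mp hc)) (not_lt.mpr h)
      · intro h
        calc FY x ≤ FY x₀ := hmono.monotone h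
        _ = t := hx₀
    have h2 : Iic t ∩ Icc (0:ℝ) 1 = Icc 0 t := by
      ext x
      constructor
      · exact fun hx => ⟨hx.2.1, hx.1⟩
      · exact fun hx => ⟨hx.2, hx.1, hx.2.trans ht1.le⟩
    have h3 : Q (Iic x₀) = ENNReal.ofReal t := by
      rw [← hx₀, hFY, ENNReal.ofReal_toReal (measure_ne_top _ _)]
    rw [h1, h2, h3, Real.volume_Icc]
    norm_num

end CDF
instance : IsProbabilityMeasure ((volume : Measure ℝ).restrict (Icc (0:ℝ) 1)) :=
  ⟨by simp⟩

lemma key (P Q : Measure ℝ) [IsProbabilityMeasure P] [IsProbabilityMeasure Q]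
    (fX fY : ℝ → ℝ) (hfXpos : ∀ x, 0 < fX x) (hfYpos : ∀ x, 0 < fY x)
    (hfXc : Continuous fX) (hfYc : Continuous fY)
    (hP : P = volume.withDensity (fun x => ENNReal.ofReal (fX x)))
    (hQ : Q = volume.withDensity (fun x => ENNReal.ofReal (fY x)))
    (FY : ℝ → ℝ) (hFY : ∀ x, FY x = (Q (Iic x)).toReal) :
    TVD (Measure.map FY P) (volume.restrict (Icc (0:ℝ) 1)) = TVD P Q := by
  have hPvol : P ≪ (volume : Measure ℝ) := hP ▸ withDensity_absolutelyContinuous _ _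
  have hQvol : Q ≪ (volume : Measure ℝ) := hQ ▸ withDensity_absolutelyContinuous _ _
  have hvolQ : (volume : Measure ℝ) ≪ Q := vol_ac hfYpos hfYc hQ
  have hPQ : P ≪ Q := hPvol.trans hvolQ
  have hmono := FY_strictMono hfYpos hfYc hQ hFY
  have hcont := FY_continuous hfYpos hfYc hQ hFY
  have hmeas : Measurable FY := hmono.monotone.measurable
  have hinj : Function.Injective FY := hmono.injective
  have hemb : MeasurableEmbedding FY := hcont.measurableEmbedding hinj
  have hmap : Measure.map FY Q = volume.restrict (Icc (0:ℝ) 1) :=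
    map_FY_eq hfYpos hfYc hQ hFY
  have hrestr : (volume : Measure ℝ).restrict (Icc (0:ℝ) 1) ≪ volume :=
    Measure.restrict_le_self.absolutelyContinuous
  have : IsProbabilityMeasure (Measure.map FY P) :=
    Measure.isProbabilityMeasure_map hmeas.aemeasurable
  have hμ₂vol : Measure.map FY P ≪ (volume : Measure ℝ) :=
    ((hPQ.map hmeas).trans (hmap ▸ hrestr))
  refine le_antisymm ?_ ?_
  · rw [tvd_eq_set (Measure.map FY P) (volume.restrict (Icc (0:ℝ) 1)) hμ₂vol hrestr]
    set S := {x | ((volume : Measure ℝ).restrict (Icc (0:ℝ) 1)).rnDeriv volume x <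
      (Measure.map FY P).rnDeriv volume x} with hSdef
    have hS : MeasurableSet S := measurableSet_lt (Measure.measurable_rnDeriv _ _)
      (Measure.measurable_rnDeriv _ _)
    rw [Measure.map_apply hmeas hS, ← hmap, Measure.map_apply hmeas hS]
    exact tvd_ge P Q hPvol hQvol _ (hmeas hS)
  · rw [tvd_eq_set P Q hPvol hQvol]
    set T := {x | Q.rnDeriv volume x < P.rnDeriv volume x} with hTdef
    have hT : MeasurableSet T := measurableSet_lt (Measure.measurable_rnDeriv _ _)
      (Measure.measurable_rnDeriv _ _)
    have hT' : MeasurableSet (FY '' T) := hemb.measurableSet_image.mpr hT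
    have h1 : P T = (Measure.map FY P) (FY '' T) := by
      rw [Measure.map_apply hmeas hT', preimage_image_eq _ hinj]
    have h2 : Q T = (volume.restrict (Icc (0:ℝ) 1)) (FY '' T) := by
      rw [← hmap, Measure.map_apply hmeas hT', preimage_image_eq _ hinj]
    rw [h1, h2]
    exact tvd_ge _ _ hμ₂vol hrestr _ hT'

/-- Let `P, Q` have everywhere positive continuous densities `fX, fY` and CDFs `FX, FY`.
With `Q_P^{QT}` the law of `FY X` for `X ~ P`, `P_Q^{QT}` the law of `FX Y` for `Y ~ Q`,
and `U` the uniform distribution on `[0, 1]`, we have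
`TVD(Q_P^{QT}, U) = TVD(P, Q)` and `TVD(P_Q^{QT}, U) = TVD(P, Q)`. -/
theorem qt_induced_tvd_eq
    (P Q : Measure ℝ) [IsProbabilityMeasure P] [IsProbabilityMeasure Q]
    (fX fY : ℝ → ℝ) (hfXpos : ∀ x, 0 < fX x) (hfYpos : ∀ x, 0 < fY x)
    (hfXc : Continuous fX) (hfYc : Continuous fY)
    (hP : P = volume.withDensity (fun x => ENNReal.ofReal (fX x)))
    (hQ : Q = volume.withDensity (fun x => ENNReal.ofReal (fY x)))
    (FX FY : ℝ → ℝ)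
    (hFX : ∀ x, FX x = (P (Iic x)).toReal)
    (hFY : ∀ x, FY x = (Q (Iic x)).toReal) :
    TVD (Measure.map (fun x => FY x) P) (volume.restrict (Icc (0 : ℝ) 1)) = TVD P Q ∧
    TVD (Measure.map (fun y => FX y) Q) (volume.restrict (Icc (0 : ℝ) 1)) = TVD P Q := by
  constructor
  · exact key P Q fX fY hfXpos hfYpos hfXc hfYc hP hQ FY hFY
  · rw [key Q P fY fX hfYpos hfXpos hfYc hfXc hQ hP FX hFX]
    unfold TVD; simp_rw [abs_sub_comm]
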